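/- If (M,P,g) is a W̄₃-manifold of dimension 2n with closed 1-form θ, then the tensor K = (1/2){R + R(·,·,P·,P·)} has Ricci tensor ρ(K)(y,z) = ρ(y,z) - (1/4n){[tr A + θ(Ω)][g(y,z)+g(y,Pz)] + 2nA(y,z)}, scalar curvature τ(K) = τ - div Ω - ((n-1)/2n)θ(Ω), and associated scalar curvature τ*(K) = τ*. -/

import Mathlib

open scoped BigOperators

/-- An abstract (local) model of a Riemannian almost product manifold of
dimension `n`: `V` plays the role of the module of smooth vector fields over
the commutative ℝ-algebra `C` of smooth functions, `g` is the Riemannian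
metric, `P` the almost product structure, `D` the directional derivative of
functions, `bracket` the Lie bracket of vector fields, `nabla` the
Levi-Civita connection of `g`, and `e`, `e'` a frame together with its
`g`-reciprocal frame (used to form traces `g^{ij}·`). -/
structure RAPM (n : ℕ) where
  V : Type
  C : Type
  [instAG : AddCommGroup V]
  [instCR : CommRing C]
  [instAlg : Algebra ℝ C]
  [instMod : Module C V]
  g : V →ₗ[C] V →ₗ[C] C
  P : V →ₗ[C] V
  gSymm : ∀ x y, g x y = g y x
  Pinvol : ∀ x, P (P x) = x
  Piso : ∀ x y, g (P x) (P y) = g x y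
  D : V → C → C
  Dadd : ∀ x f h, D x (f + h) = D x f + D x h
  bracket : V → V → V
  bracketD : ∀ x y f, D (bracket x y) f = D x (D y f) - D y (D x f)
  jacobi : ∀ x y z,
    bracket x (bracket y z) + bracket y (bracket z x) + bracket z (bracket x y) = 0
  nabla : V → V → V
  nabla_add₁ : ∀ x y z, nabla (x + y) z = nabla x z + nabla y z
  nabla_smul₁ : ∀ (f : C) x y, nabla (f • x) y = f • nabla x y
  nabla_add₂ : ∀ x y z, nabla x (y + z) = nabla x y + nabla x z
  nabla_leibniz : ∀ x (f : C) y, nabla x (f • y) = D x f • y + f • nabla x y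
  nabla_metric : ∀ x y z, D x (g y z) = g (nabla x y) z + g y (nabla x z)
  torsion_free : ∀ x y, nabla x y - nabla y x = bracket x y
  e : Fin n → V
  e' : Fin n → V
  dual_frame : ∀ i j, g (e' i) (e j) = if i = j then 1 else 0
  frame_span : ∀ v : V, v = ∑ i, g (e' i) v • e i

namespace RAPM

attribute [instance] RAPM.instAG RAPM.instCR RAPM.instAlg RAPM.instMod

variable {n : ℕ} (Q : RAPM n)

/-- The fundamental tensor `F(x,y,z) = g((∇ₓP)y, z)`. -/
def F (x y z : Q.V) : Q.C := Q.g (Q.nabla x (Q.P y) - Q.P (Q.nabla x y)) z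

/-- The curvature operator `R(x,y)z`. -/
def R (x y z : Q.V) : Q.V :=
  Q.nabla x (Q.nabla y z) - Q.nabla y (Q.nabla x z) - Q.nabla (Q.bracket x y) z

/-- The (0,4) curvature tensor `R(x,y,z,w) = g(R(x,y)z, w)`. -/
def Rm (x y z w : Q.V) : Q.C := Q.g (Q.R x y z) w

/-- `tr P = g^{ij} g(e_i, P e_j)`. -/
def trP : Q.C := ∑ i, Q.g (Q.e' i) (Q.P (Q.e i))

/-- The Lee form `θ(x) = g^{ij} F(e_i, e_j, x)`. -/
def theta (x : Q.V) : Q.C := ∑ i, Q.F (Q.e' i) (Q.e i) x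

/-- The covariant derivative `(∇ₓθ)y`. -/
def nablaTheta (x y : Q.V) : Q.C := Q.D x (Q.theta y) - Q.theta (Q.nabla x y)

/-- `θ` is closed iff `(∇ₓθ)y = (∇_yθ)x`. -/
def closed : Prop := ∀ x y, Q.nablaTheta x y = Q.nablaTheta y x

/-- The covariant derivative `(∇ₓF)(y,z,w)`. -/
def nablaF (x y z w : Q.V) : Q.C :=
  Q.D x (Q.F y z w) - Q.F (Q.nabla x y) z w - Q.F y (Q.nabla x z) w
    - Q.F y z (Q.nabla x w)

def psi1 (S : Q.V → Q.V → Q.C) (x y z w : Q.V) : Q.C :=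
  Q.g y z * S x w - Q.g x z * S y w + S y z * Q.g x w - S x z * Q.g y w

def psi2 (S : Q.V → Q.V → Q.C) (x y z w : Q.V) : Q.C :=
  Q.psi1 S x y (Q.P z) (Q.P w)

/-- The associated metric `g̃(x,y) = g(x,Py)`. -/
def gP (x y : Q.V) : Q.C := Q.g x (Q.P y)

noncomputable def pi1 (x y z w : Q.V) : Q.C :=
  ((1 : ℝ)/2) • Q.psi1 (fun a b => Q.g a b) x y z w

noncomputable def pi2 (x y z w : Q.V) : Q.C :=
  ((1 : ℝ)/2) • Q.psi2 (fun a b => Q.g a b) x y z w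

def pi3 (x y z w : Q.V) : Q.C := Q.psi1 Q.gP x y z w

/-- The Ricci tensor `ρ(L)(y,z) = g^{ij} L(e_i,y,z,e_j)` of a (0,4)-tensor. -/
def ric (L : Q.V → Q.V → Q.V → Q.V → Q.C) (y z : Q.V) : Q.C :=
  ∑ i, L (Q.e' i) y z (Q.e i)

/-- The scalar curvature `τ(L) = g^{ij} ρ(L)(e_i,e_j)`. -/
def scal (L : Q.V → Q.V → Q.V → Q.V → Q.C) : Q.C := ∑ i, Q.ric L (Q.e i) (Q.e' i)

/-- The associated Ricci tensor `ρ*(L)(y,z) = g^{ij} L(e_i,y,z,Pe_j)`. -/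
def ricStar (L : Q.V → Q.V → Q.V → Q.V → Q.C) (y z : Q.V) : Q.C :=
  ∑ i, L (Q.e' i) y z (Q.P (Q.e i))

/-- The associated scalar curvature `τ*(L)`. -/
def scalStar (L : Q.V → Q.V → Q.V → Q.V → Q.C) : Q.C :=
  ∑ i, Q.ricStar L (Q.e i) (Q.e' i)

/-- The trace `g^{ij} S(e_i,e_j)` of a (0,2)-tensor. -/
def trB (S : Q.V → Q.V → Q.C) : Q.C := ∑ i, S (Q.e i) (Q.e' i)

/-- The divergence of a vector field. -/
def divg (v : Q.V) : Q.C := ∑ i, Q.g (Q.e' i) (Q.nabla (Q.e i) v)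

/-- A curvature-like tensor. -/
def curvatureLike (L : Q.V → Q.V → Q.V → Q.V → Q.C) : Prop :=
  (∀ x y z w, L x y z w = - L y x z w) ∧
  (∀ x y z w, L x y z w = - L x y w z) ∧
  (∀ x y z w, L x y z w + L y z x w + L z x y w = 0)

/-- A Riemannian P-tensor. -/
def isPtensor (L : Q.V → Q.V → Q.V → Q.V → Q.C) : Prop :=
  Q.curvatureLike L ∧ ∀ x y z w, L x y (Q.P z) (Q.P w) = L x y z w

/-- The defining condition of the Naveira class `W̄₃` (dimension `n`, so the
factor `1/(2n)` of the paper is `1/n` here). -/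
def W3 : Prop :=
  (∀ x y z, Q.F x y z =
    ((1 : ℝ)/(n : ℝ)) • ((Q.g x y + Q.g x (Q.P y)) * Q.theta z +
      (Q.g x z + Q.g x (Q.P z)) * Q.theta y)) ∧
  (∀ x, Q.theta (Q.P x) = - Q.theta x)

/-- The defining condition of the Naveira class `W̄₆`. -/
def W6 : Prop :=
  (∀ x y z, Q.F x y z =
    ((1 : ℝ)/(n : ℝ)) • ((Q.g x y - Q.g x (Q.P y)) * Q.theta z +
      (Q.g x z - Q.g x (Q.P z)) * Q.theta y)) ∧
  (∀ x, Q.theta (Q.P x) = Q.theta x)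

end RAPM
namespace RAPM

section Aux

variable {m : ℕ} (Q : RAPM m)

lemma g_smul₁ (c : Q.C) (x y : Q.V) : Q.g (c • x) y = c * Q.g x y := by
  rw [map_smul]; rfl

lemma g_smul₂ (c : Q.C) (x y : Q.V) : Q.g x (c • y) = c * Q.g x y := by
  rw [map_smul]; rfl

lemma g_add₁ (x y z : Q.V) : Q.g (x + y) z = Q.g x z + Q.g y z := by
  rw [map_add]; rfl

lemma g_add₂ (x y z : Q.V) : Q.g x (y + z) = Q.g x y + Q.g x z := map_add _ _ _

lemma g_sub₁ (x y z : Q.V) : Q.g (x - y) z = Q.g x z - Q.g y z := by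
  rw [map_sub]; rfl

lemma g_sub₂ (x y z : Q.V) : Q.g x (y - z) = Q.g x y - Q.g x z := map_sub _ _ _

lemma g_neg₁ (x y : Q.V) : Q.g (-x) y = - Q.g x y := by rw [map_neg]; rfl

lemma g_neg₂ (x y : Q.V) : Q.g x (-y) = - Q.g x y := map_neg _ _

lemma g_zero₁ (y : Q.V) : Q.g 0 y = 0 := by rw [map_zero]; rfl

lemma g_zero₂ (x : Q.V) : Q.g x 0 = 0 := map_zero _

lemma gP₂ (x y : Q.V) : Q.g x (Q.P y) = Q.g (Q.P x) y := by
  conv_lhs => rw [← Q.Pinvol x]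
  rw [Q.Piso]

/-- the `e`-coefficients determine a vector -/
lemma ext_coeff {v w : Q.V} (h : ∀ i, Q.g (Q.e' i) v = Q.g (Q.e' i) w) : v = w := by
  rw [Q.frame_span v, Q.frame_span w]
  exact Finset.sum_congr rfl fun i _ => by rw [h]

lemma eq_of_g {v w : Q.V} (h : ∀ u, Q.g v u = Q.g u w) : v = w := by
  refine Q.ext_coeff fun i => ?_
  rw [Q.gSymm _ v, h]

lemma nabla_zero₂ (x : Q.V) : Q.nabla x 0 = 0 := by
  have := Q.nabla_add₂ x 0 0
  rw [add_zero] at this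
  exact (right_eq_add.mp this)

lemma nabla_neg₂ (x y : Q.V) : Q.nabla x (-y) = - Q.nabla x y := by
  have := Q.nabla_add₂ x y (-y)
  rw [add_neg_cancel, Q.nabla_zero₂] at this
  exact (neg_eq_of_add_eq_zero_right this.symm).symm

lemma nabla_sub₂ (x y z : Q.V) : Q.nabla x (y - z) = Q.nabla x y - Q.nabla x z := by
  rw [sub_eq_add_neg, Q.nabla_add₂, Q.nabla_neg₂, sub_eq_add_neg]

lemma nabla_sub₁ (x y z : Q.V) : Q.nabla (x - y) z = Q.nabla x z - Q.nabla y z := by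
  have h0 : Q.nabla (0 : Q.V) z = 0 := by
    have := Q.nabla_add₁ 0 0 z
    rw [add_zero] at this
    exact right_eq_add.mp this
  have hneg : Q.nabla (-y) z = - Q.nabla y z := by
    have := Q.nabla_add₁ y (-y) z
    rw [add_neg_cancel, h0] at this
    exact (neg_eq_of_add_eq_zero_right this.symm).symm
  rw [sub_eq_add_neg, Q.nabla_add₁, hneg, sub_eq_add_neg]

lemma bracket_eq (x y : Q.V) : Q.bracket x y = Q.nabla x y - Q.nabla y x :=
  (Q.torsion_free x y).symm

lemma g_sum₂ (x : Q.V) (f : Fin m → Q.V) : Q.g x (∑ i, f i) = ∑ i, Q.g x (f i) :=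
  map_sum _ _ _

lemma g_sum₁ (f : Fin m → Q.V) (y : Q.V) : Q.g (∑ i, f i) y = ∑ i, Q.g (f i) y := by
  rw [Q.gSymm, Q.g_sum₂]
  exact Finset.sum_congr rfl fun i _ => Q.gSymm _ _

/-- sum over frame of a linear functional -/
lemma contract_e (S : Q.V → Q.C) (hadd : ∀ a b, S (a + b) = S a + S b)
    (hsmul : ∀ (c : Q.C) a, S (c • a) = c * S a) (v : Q.V) :
    ∑ i, Q.g (Q.e' i) v * S (Q.e i) = S v := by
  let S' : Q.V →+ Q.C := AddMonoidHom.mk' S hadd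
  have hS' : ∀ u, S u = S' u := fun u => rfl
  calc ∑ i, Q.g (Q.e' i) v * S (Q.e i)
      = ∑ i, S' (Q.g (Q.e' i) v • Q.e i) := by
        refine Finset.sum_congr rfl fun i _ => ?_
        rw [← hS', hsmul]
    _ = S' (∑ i, Q.g (Q.e' i) v • Q.e i) := (map_sum S' _ _).symm
    _ = S v := by rw [← Q.frame_span v, hS']

/-- Gram matrices of the two frames are mutually inverse -/
lemma gram (j l : Fin m) :
    (∑ i, Q.g (Q.e' i) (Q.e' j) * Q.g (Q.e i) (Q.e l)) = if j = l then 1 else 0 := by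
  have h : Q.g (Q.e' j) (Q.e l) = ∑ i, Q.g (Q.e' i) (Q.e' j) * Q.g (Q.e i) (Q.e l) := by
    conv_lhs => rw [Q.frame_span (Q.e' j)]
    rw [Q.g_sum₁]
    exact Finset.sum_congr rfl fun i _ => Q.g_smul₁ _ _ _
  rw [← h, Q.dual_frame]

lemma span' (v : Q.V) : v = ∑ i, Q.g (Q.e i) v • Q.e' i := by
  refine Q.ext_coeff fun j => ?_
  rw [Q.g_sum₂]
  have step1 : ∀ i, Q.g (Q.e' j) (Q.g (Q.e i) v • Q.e' i)
      = ∑ l, Q.g (Q.e' l) v * Q.g (Q.e i) (Q.e l) * Q.g (Q.e' i) (Q.e' j) := by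
    intro i
    rw [Q.g_smul₂]
    have hv : Q.g (Q.e i) v = ∑ l, Q.g (Q.e' l) v * Q.g (Q.e i) (Q.e l) := by
      conv_lhs => rw [Q.frame_span v]
      rw [Q.g_sum₂]
      exact Finset.sum_congr rfl fun l _ => Q.g_smul₂ _ _ _
    rw [hv, Finset.sum_mul]
    exact Finset.sum_congr rfl fun l _ => by rw [Q.gSymm (Q.e' j) (Q.e' i)]
  rw [Finset.sum_congr rfl fun i (_ : i ∈ Finset.univ) => step1 i, Finset.sum_comm]
  have step2 : ∀ l, (∑ i, Q.g (Q.e' l) v * Q.g (Q.e i) (Q.e l) * Q.g (Q.e' i) (Q.e' j))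
      = Q.g (Q.e' l) v * (if l = j then 1 else 0) := by
    intro l
    calc (∑ i, Q.g (Q.e' l) v * Q.g (Q.e i) (Q.e l) * Q.g (Q.e' i) (Q.e' j))
        = ∑ i, Q.g (Q.e' l) v * (Q.g (Q.e' i) (Q.e' j) * Q.g (Q.e i) (Q.e l)) :=
          Finset.sum_congr rfl fun i _ => by ring
      _ = Q.g (Q.e' l) v * ∑ i, Q.g (Q.e' i) (Q.e' j) * Q.g (Q.e i) (Q.e l) :=
          (Finset.mul_sum _ _ _).symm
      _ = Q.g (Q.e' l) v * (if l = j then 1 else 0) := by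
          rw [Q.gram j l]
          congr 1
          by_cases h : j = l <;> simp [h, eq_comm]
  rw [Finset.sum_congr rfl fun l (_ : l ∈ Finset.univ) => step2 l]
  simp

/-- reversed contraction -/
lemma contract_e' (S : Q.V → Q.C) (hadd : ∀ a b, S (a + b) = S a + S b)
    (hsmul : ∀ (c : Q.C) a, S (c • a) = c * S a) (v : Q.V) :
    ∑ i, Q.g (Q.e i) v * S (Q.e' i) = S v := by
  let S' : Q.V →+ Q.C := AddMonoidHom.mk' S hadd
  have hS' : ∀ u, S u = S' u := fun u => rfl
  calc ∑ i, Q.g (Q.e i) v * S (Q.e' i)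
      = ∑ i, S' (Q.g (Q.e i) v • Q.e' i) := by
        refine Finset.sum_congr rfl fun i _ => ?_
        rw [← hS', hsmul]
    _ = S' (∑ i, Q.g (Q.e i) v • Q.e' i) := (map_sum S' _ _).symm
    _ = S v := by rw [← Q.span' v, hS']

/-- trace swap -/
lemma tr_swap (B : Q.V → Q.V → Q.C)
    (h1a : ∀ a b c, B (a + b) c = B a c + B b c)
    (h1s : ∀ (f : Q.C) a c, B (f • a) c = f * B a c)
    (h2a : ∀ a b c, B a (b + c) = B a b + B a c)
    (h2s : ∀ (f : Q.C) a c, B a (f • c) = f * B a c) :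
    ∑ i, B (Q.e' i) (Q.e i) = ∑ i, B (Q.e i) (Q.e' i) := by
  have sum1 : ∀ (v : Fin m → Q.V) (w : Q.V), B (∑ k, v k) w = ∑ k, B (v k) w := by
    intro v w
    exact map_sum (AddMonoidHom.mk' (fun u => B u w) (fun a b => h1a a b w)) v Finset.univ
  have sum2 : ∀ (w : Q.V) (v : Fin m → Q.V), B w (∑ k, v k) = ∑ k, B w (v k) := by
    intro w v
    exact map_sum (AddMonoidHom.mk' (fun u => B w u) (fun a b => h2a w a b)) v Finset.univ
  have expand1 : ∀ i, B (Q.e' i) (Q.e i)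
      = ∑ k, Q.g (Q.e' k) (Q.e' i) * B (Q.e k) (Q.e i) := by
    intro i
    conv_lhs => rw [Q.frame_span (Q.e' i)]
    rw [sum1]
    exact Finset.sum_congr rfl fun k _ => h1s _ _ _
  have expand2 : ∀ i, B (Q.e i) (Q.e' i)
      = ∑ k, Q.g (Q.e' k) (Q.e' i) * B (Q.e i) (Q.e k) := by
    intro i
    conv_lhs => rw [Q.frame_span (Q.e' i)]
    rw [sum2]
    exact Finset.sum_congr rfl fun k _ => h2s _ _ _
  rw [Finset.sum_congr rfl fun i (_ : i ∈ Finset.univ) => expand1 i,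
      Finset.sum_congr rfl fun i (_ : i ∈ Finset.univ) => expand2 i, Finset.sum_comm]
  refine Finset.sum_congr rfl fun i _ => Finset.sum_congr rfl fun k _ => ?_
  rw [Q.gSymm (Q.e' i) (Q.e' k)]
lemma D_neg (x : Q.V) (c : Q.C) : Q.D x (-c) = - Q.D x c := by
  exact map_neg (AddMonoidHom.mk' (Q.D x) (Q.Dadd x)) c

lemma D_sub (x : Q.V) (c d : Q.C) : Q.D x (c - d) = Q.D x c - Q.D x d := by
  exact map_sub (AddMonoidHom.mk' (Q.D x) (Q.Dadd x)) c d

lemma D_g_mul (x : Q.V) (f : Q.C) (Y w : Q.V) :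
    Q.D x (f * Q.g Y w) = Q.D x f * Q.g Y w + f * Q.D x (Q.g Y w) := by
  have h1 : f * Q.g Y w = Q.g (f • Y) w := (Q.g_smul₁ f Y w).symm
  rw [h1, Q.nabla_metric, Q.nabla_leibniz, Q.g_add₁, Q.g_smul₁, Q.g_smul₁, Q.g_smul₁,
    Q.nabla_metric]
  ring

lemma D_one (i0 : Fin m) (x : Q.V) : Q.D x (1 : Q.C) = 0 := by
  have h1 : Q.g (Q.e' i0) (Q.e i0) = 1 := by rw [Q.dual_frame]; simp
  have h2 := Q.D_g_mul x 1 (Q.e' i0) (Q.e i0)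
  rw [h1] at h2
  simp only [mul_one, one_mul] at h2
  exact (right_eq_add.mp h2)

lemma D_natCast (i0 : Fin m) (x : Q.V) (k : ℕ) : Q.D x ((k : ℕ) : Q.C) = 0 := by
  have hcast : ((k : ℕ) : Q.C) = k • (1 : Q.C) := by simp
  rw [hcast]
  have := map_nsmul (AddMonoidHom.mk' (Q.D x) (Q.Dadd x)) k (1 : Q.C)
  rw [show (AddMonoidHom.mk' (Q.D x) (Q.Dadd x)) (k • (1:Q.C)) = Q.D x (k • (1:Q.C)) from rfl]
    at this
  rw [this, show (AddMonoidHom.mk' (Q.D x) (Q.Dadd x)) (1:Q.C) = Q.D x 1 from rfl,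
    Q.D_one i0, smul_zero]

lemma D_inv (i0 : Fin m) (κ : Q.C) (hκ : κ * ((m : ℕ) : Q.C) = 1) (x : Q.V) :
    Q.D x κ = 0 := by
  have hg : ((m : ℕ) : Q.C) = Q.g (((m : ℕ) : Q.C) • Q.e' i0) (Q.e i0) := by
    rw [Q.g_smul₁, Q.dual_frame]; simp
  have h2 := Q.D_g_mul x κ (((m : ℕ) : Q.C) • Q.e' i0) (Q.e i0)
  rw [← hg, hκ, Q.D_one i0, Q.D_natCast i0] at h2
  have h3 : Q.D x κ * ((m : ℕ) : Q.C) = 0 := by linear_combination -h2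
  linear_combination κ * h3 - Q.D x κ * hκ

/- curvature basics -/

lemma nabla_neg₁ (y z : Q.V) : Q.nabla (-y) z = - Q.nabla y z := by
  have h0 : Q.nabla (0 : Q.V) z = 0 := by
    have := Q.nabla_add₁ 0 0 z
    rw [add_zero] at this
    exact right_eq_add.mp this
  have := Q.nabla_add₁ y (-y) z
  rw [add_neg_cancel, h0] at this
  exact (neg_eq_of_add_eq_zero_right this.symm).symm

lemma R_swap (x y z : Q.V) : Q.R x y z = - Q.R y x z := by
  unfold R
  rw [Q.bracket_eq x y, Q.bracket_eq y x, Q.nabla_sub₁, Q.nabla_sub₁]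
  abel

lemma R_add₃ (x y z w : Q.V) : Q.R x y (z + w) = Q.R x y z + Q.R x y w := by
  unfold R
  rw [Q.nabla_add₂, Q.nabla_add₂, Q.nabla_add₂, Q.nabla_add₂, Q.nabla_add₂]
  abel

lemma Rm_add₃ (x y z w u : Q.V) : Q.Rm x y (z + w) u = Q.Rm x y z u + Q.Rm x y w u := by
  unfold Rm
  rw [Q.R_add₃, Q.g_add₁]

lemma Rm_diag (x y z : Q.V) : Q.Rm x y z z = 0 := by
  have dtwo : ∀ (u : Q.V) (c : Q.C), Q.D u (2 * c) = 2 * Q.D u c := by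
    intro u c
    rw [two_mul, Q.Dadd, ← two_mul]
  have e1 : ∀ (u : Q.V), 2 * Q.g (Q.nabla u z) z = Q.D u (Q.g z z) := by
    intro u
    rw [Q.nabla_metric, Q.gSymm z (Q.nabla u z)]
    ring
  have key : 2 * Q.Rm x y z z = 0 := by
    unfold Rm R
    rw [Q.g_sub₁, Q.g_sub₁]
    have h1 : Q.g (Q.nabla x (Q.nabla y z)) z
        = Q.D x (Q.g (Q.nabla y z) z) - Q.g (Q.nabla y z) (Q.nabla x z) := by
      rw [Q.nabla_metric]; ring
    have h2 : Q.g (Q.nabla y (Q.nabla x z)) z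
        = Q.D y (Q.g (Q.nabla x z) z) - Q.g (Q.nabla x z) (Q.nabla y z) := by
      rw [Q.nabla_metric]; ring
    have h3 : 2 * Q.g (Q.nabla (Q.bracket x y) z) z = Q.D (Q.bracket x y) (Q.g z z) :=
      e1 _
    have h4 : Q.D (Q.bracket x y) (Q.g z z)
        = Q.D x (Q.D y (Q.g z z)) - Q.D y (Q.D x (Q.g z z)) := Q.bracketD x y _
    have h5 : 2 * Q.D x (Q.g (Q.nabla y z) z) = Q.D x (Q.D y (Q.g z z)) := by
      rw [← e1 y, dtwo]
    have h6 : 2 * Q.D y (Q.g (Q.nabla x z) z) = Q.D y (Q.D x (Q.g z z)) := by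
      rw [← e1 x, dtwo]
    have hsym : Q.g (Q.nabla y z) (Q.nabla x z) = Q.g (Q.nabla x z) (Q.nabla y z) :=
      Q.gSymm _ _
    linear_combination 2 * h1 - 2 * h2 - h3 - h4 + h5 - h6 - 2 * hsym
  have h2 : ((1:ℝ)/2) • ((2 : Q.C) * Q.Rm x y z z) = Q.Rm x y z z := by
    rw [Algebra.smul_def, show ((2:Q.C)) = algebraMap ℝ Q.C 2 from (map_ofNat _ 2).symm,
      ← mul_assoc, ← map_mul]
    norm_num
  rw [← h2, key, smul_zero]

lemma Rm_swap34 (x y z w : Q.V) : Q.Rm x y z w = - Q.Rm x y w z := by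
  have h := Q.Rm_diag x y (z + w)
  have hz := Q.Rm_diag x y z
  have hw := Q.Rm_diag x y w
  have expand : Q.Rm x y (z + w) (z + w)
      = Q.Rm x y z z + Q.Rm x y z w + Q.Rm x y w z + Q.Rm x y w w := by
    rw [Q.Rm_add₃]
    unfold Rm
    rw [Q.g_add₂, Q.g_add₂]
    ring
  rw [expand, hz, hw] at h
  linear_combination h
lemma half (a b : Q.C) (h : 2 * a = 2 * b) : a = b := by
  have l : ∀ c : Q.C, ((1:ℝ)/2) • (2 * c) = c := by
    intro c
    rw [Algebra.smul_def, show ((2:Q.C)) = algebraMap ℝ Q.C 2 from (map_ofNat _ 2).symm,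
      ← mul_assoc, ← map_mul]
    norm_num
  calc a = ((1:ℝ)/2) • (2 * a) := (l a).symm
    _ = ((1:ℝ)/2) • (2 * b) := by rw [h]
    _ = b := l b

lemma Rm_swap12 (x y z w : Q.V) : Q.Rm x y z w = - Q.Rm y x z w := by
  unfold Rm
  rw [Q.R_swap, Q.g_neg₁]

lemma bianchiV (x y z : Q.V) : Q.R x y z + Q.R y z x + Q.R z x y = 0 := by
  have j := Q.jacobi x y z
  simp only [Q.bracket_eq, Q.nabla_sub₁, Q.nabla_sub₂] at j
  unfold R
  simp only [Q.bracket_eq, Q.nabla_sub₁, Q.nabla_sub₂]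
  abel_nf at j ⊢
  exact j

lemma Rm_bianchi (x y z w : Q.V) : Q.Rm x y z w + Q.Rm y z x w + Q.Rm z x y w = 0 := by
  unfold Rm
  rw [← Q.g_add₁, ← Q.g_add₁, Q.bianchiV, Q.g_zero₁]

lemma Rm_pair (x y z w : Q.V) : Q.Rm x y z w = Q.Rm z w x y := by
  apply Q.half
  have b1 := Q.Rm_bianchi x y z w
  have b2 := Q.Rm_bianchi y z w x
  have b3 := Q.Rm_bianchi z w x y
  have b4 := Q.Rm_bianchi w x y z
  have s1 := Q.Rm_swap34 x y z w
  have s2 := Q.Rm_swap12 x z y w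
  have s3 := Q.Rm_swap34 x z y w
  have s4 := Q.Rm_swap12 x w y z
  have s5 := Q.Rm_swap34 x w y z
  have s6 := Q.Rm_swap12 x w z y
  have s7 := Q.Rm_swap34 y z x w
  have s8 := Q.Rm_swap34 y w x z
  have s9 := Q.Rm_swap12 y w z x
  have s10 := Q.Rm_swap34 z w x y
  linear_combination b1 + b2 - b3 - b4 + s1 - s2 + s3 + s4 - s5 + s6 - s7 + s8 - s9 - s10

lemma nablaF_eq (x y z w : Q.V) :
    Q.nablaF x y z w = Q.g (Q.nabla x (Q.nabla y (Q.P z) - Q.P (Q.nabla y z))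
      - (Q.nabla (Q.nabla x y) (Q.P z) - Q.P (Q.nabla (Q.nabla x y) z))
      - (Q.nabla y (Q.P (Q.nabla x z)) - Q.P (Q.nabla y (Q.nabla x z)))) w := by
  unfold nablaF F
  rw [Q.nabla_metric x (Q.nabla y (Q.P z) - Q.P (Q.nabla y z)) w]
  simp only [Q.nabla_sub₂, Q.g_sub₁, Q.g_sub₂]
  ring

lemma ricciP (x y z w : Q.V) :
    Q.Rm x y (Q.P z) (Q.P w)
      = Q.Rm x y z w + Q.nablaF x y z (Q.P w) - Q.nablaF y x z (Q.P w) := by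
  rw [Q.nablaF_eq, Q.nablaF_eq]
  have hvec :
      (Q.nabla x (Q.nabla y (Q.P z) - Q.P (Q.nabla y z))
        - (Q.nabla (Q.nabla x y) (Q.P z) - Q.P (Q.nabla (Q.nabla x y) z))
        - (Q.nabla y (Q.P (Q.nabla x z)) - Q.P (Q.nabla y (Q.nabla x z))))
      - (Q.nabla y (Q.nabla x (Q.P z) - Q.P (Q.nabla x z))
        - (Q.nabla (Q.nabla y x) (Q.P z) - Q.P (Q.nabla (Q.nabla y x) z))
        - (Q.nabla x (Q.P (Q.nabla y z)) - Q.P (Q.nabla x (Q.nabla y z))))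
      = Q.R x y (Q.P z) - Q.P (Q.R x y z) := by
    unfold R
    rw [Q.bracket_eq]
    simp only [Q.nabla_sub₁, Q.nabla_sub₂, map_sub]
    abel
  have h2 := congrArg (fun v => Q.g v (Q.P w)) hvec
  rw [Q.g_sub₁, Q.g_sub₁ (Q.R x y (Q.P z))] at h2
  have h3 : Q.g (Q.P (Q.R x y z)) (Q.P w) = Q.g (Q.R x y z) w := Q.Piso _ _
  rw [h3] at h2
  show Q.g (Q.R x y (Q.P z)) (Q.P w) = Q.g (Q.R x y z) w + _ - _
  linear_combination -h2
/- ######### W3-specific lemmas ######### -/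

section W3sec

variable (κ : Q.C) (Ω : Q.V)

lemma F_add₁ (a b z y : Q.V) : Q.F (a + b) z y = Q.F a z y + Q.F b z y := by
  unfold F
  rw [Q.nabla_add₁, Q.nabla_add₁, map_add]
  simp only [Q.g_sub₁, Q.g_add₁]
  ring

lemma F_smul₁ (c : Q.C) (a z y : Q.V) : Q.F (c • a) z y = c * Q.F a z y := by
  unfold F
  rw [Q.nabla_smul₁, Q.nabla_smul₁, map_smul]
  simp only [Q.g_sub₁, Q.g_smul₁]
  ring

lemma Fval (x z y : Q.V) :
    Q.F x z y = Q.g y (Q.nabla x (Q.P z)) - Q.g y (Q.P (Q.nabla x z)) := by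
  unfold F
  rw [Q.g_sub₁, Q.gSymm (Q.nabla x (Q.P z)) y, Q.gSymm (Q.P (Q.nabla x z)) y]

lemma F_sym23 (x a b : Q.V) : Q.F x a b = Q.F x b a := by
  have h1 := Q.nabla_metric x (Q.P a) b
  have h2 := Q.nabla_metric x a (Q.P b)
  have h3 : Q.g (Q.P a) b = Q.g a (Q.P b) := (Q.gP₂ a b).symm
  rw [h3] at h1
  rw [h1] at h2
  unfold F
  rw [Q.g_sub₁, Q.g_sub₁]
  have h4 : Q.g (Q.P (Q.nabla x a)) b = Q.g (Q.nabla x a) (Q.P b) := (Q.gP₂ _ _).symm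
  have h5 : Q.g (Q.P (Q.nabla x b)) a = Q.g (Q.nabla x b) (Q.P a) := (Q.gP₂ _ _).symm
  have h6 : Q.g (Q.P a) (Q.nabla x b) = Q.g (Q.nabla x b) (Q.P a) := Q.gSymm _ _
  have h7 : Q.g a (Q.nabla x (Q.P b)) = Q.g (Q.nabla x (Q.P b)) a := Q.gSymm _ _
  linear_combination h2 - h4 + h5 - h6 + h7

lemma D_mul_gg (hDκ : ∀ u, Q.D u κ = 0) (x a b c d : Q.V) :
    Q.D x (κ * (Q.g a b * Q.g c d))
      = κ * ((Q.g (Q.nabla x a) b + Q.g a (Q.nabla x b)) * Q.g c d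
        + Q.g a b * (Q.g (Q.nabla x c) d + Q.g c (Q.nabla x d))) := by
  rw [show κ * (Q.g a b * Q.g c d) = (κ * Q.g a b) * Q.g c d from by ring,
    Q.D_g_mul, Q.D_g_mul, hDκ, Q.nabla_metric, Q.nabla_metric]
  ring

lemma D_quad (hDκ : ∀ u, Q.D u κ = 0) (x a b b' c d : Q.V) :
    Q.D x (κ * ((Q.g a b + Q.g a b') * Q.g c d))
      = κ * (((Q.g (Q.nabla x a) b + Q.g a (Q.nabla x b))
          + (Q.g (Q.nabla x a) b' + Q.g a (Q.nabla x b'))) * Q.g c d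
        + (Q.g a b + Q.g a b') * (Q.g (Q.nabla x c) d + Q.g c (Q.nabla x d))) := by
  rw [show κ * ((Q.g a b + Q.g a b') * Q.g c d)
      = κ * (Q.g a b * Q.g c d) + κ * (Q.g a b' * Q.g c d) from by ring,
    Q.Dadd, Q.D_mul_gg κ hDκ, Q.D_mul_gg κ hDκ]
  ring

lemma nablaF_W3
    (hF : ∀ a b c, Q.F a b c = κ * ((Q.g a b + Q.g a (Q.P b)) * Q.g Ω c
      + (Q.g a c + Q.g a (Q.P c)) * Q.g Ω b))
    (hDκ : ∀ u, Q.D u κ = 0) (x y z w : Q.V) :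
    Q.nablaF x y z w
      = κ * ((Q.g y (Q.nabla x (Q.P z)) - Q.g y (Q.P (Q.nabla x z))) * Q.g Ω w)
      + κ * ((Q.g y z + Q.g y (Q.P z)) * Q.g (Q.nabla x Ω) w)
      + κ * (Q.g (Q.nabla x Ω) z * (Q.g y w + Q.g y (Q.P w)))
      + κ * ((Q.g y (Q.nabla x (Q.P w)) - Q.g y (Q.P (Q.nabla x w))) * Q.g Ω z) := by
  unfold nablaF
  rw [hF y z w, mul_add, Q.Dadd, Q.D_quad κ hDκ, Q.D_quad κ hDκ,
    hF (Q.nabla x y) z w, hF y (Q.nabla x z) w, hF y z (Q.nabla x w)]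
  ring

end W3sec
section W3sec2

variable (κ : Q.C) (Ω : Q.V)

lemma gΩP (hPΩ : Q.P Ω = -Ω) (v : Q.V) : Q.g Ω (Q.P v) = - Q.g Ω v := by
  rw [Q.gP₂, hPΩ, Q.g_neg₁]

lemma Pid (hPΩ : Q.P Ω = -Ω) (x v : Q.V) :
    Q.g (Q.nabla x Ω) (Q.P v) = - Q.g (Q.nabla x Ω) v - Q.F x v Ω := by
  have h2 := Q.nabla_metric x Ω (Q.P v)
  rw [Q.gΩP Ω hPΩ v, Q.D_neg, Q.nabla_metric] at h2
  have h3 : Q.F x v Ω = Q.g (Q.nabla x (Q.P v)) Ω - Q.g (Q.P (Q.nabla x v)) Ω := by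
    unfold F; rw [Q.g_sub₁]
  have h4 : Q.g Ω (Q.nabla x (Q.P v)) = Q.g (Q.nabla x (Q.P v)) Ω := Q.gSymm _ _
  have h5 : Q.g (Q.P (Q.nabla x v)) Ω = Q.g (Q.nabla x v) (Q.P Ω) := (Q.gP₂ _ _).symm
  have h6 : Q.g (Q.nabla x v) (Q.P Ω) = - Q.g (Q.nabla x v) Ω := by rw [hPΩ, Q.g_neg₂]
  have h7 : Q.g Ω (Q.nabla x v) = Q.g (Q.nabla x v) Ω := Q.gSymm _ _
  linear_combination -h2 + h3 - h4 - h5 - h6 - h7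

lemma FΩ3 (hF : ∀ a b c, Q.F a b c = κ * ((Q.g a b + Q.g a (Q.P b)) * Q.g Ω c
      + (Q.g a c + Q.g a (Q.P c)) * Q.g Ω b)) (hPΩ : Q.P Ω = -Ω) (x v : Q.V) :
    Q.F x v Ω = κ * ((Q.g x v + Q.g x (Q.P v)) * Q.g Ω Ω) := by
  rw [hF x v Ω, hPΩ, Q.g_neg₂]
  ring

lemma FΩ1 (hF : ∀ a b c, Q.F a b c = κ * ((Q.g a b + Q.g a (Q.P b)) * Q.g Ω c
      + (Q.g a c + Q.g a (Q.P c)) * Q.g Ω b)) (hPΩ : Q.P Ω = -Ω) (z y : Q.V) : Q.F Ω z y = 0 := by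
  rw [hF Ω z y, Q.gP₂ Ω z, Q.gP₂ Ω y, hPΩ, Q.g_neg₁, Q.g_neg₁]
  ring

lemma sum_diag : (∑ i, Q.g (Q.e' i) (Q.e i)) = ((m : ℕ) : Q.C) := by
  simp [Q.dual_frame]

lemma sum_trP (htr : Q.trP = 0) : (∑ i, Q.g (Q.e' i) (Q.P (Q.e i))) = 0 := htr

lemma sum_divg (hcl : ∀ a b, Q.g (Q.nabla a Ω) b = Q.g (Q.nabla b Ω) a) :
    ∑ i, Q.g (Q.nabla (Q.e' i) Ω) (Q.e i) = Q.divg Ω := by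
  rw [show Q.divg Ω = ∑ i, Q.g (Q.e' i) (Q.nabla (Q.e i) Ω) from rfl]
  exact Finset.sum_congr rfl fun i _ => by rw [hcl, Q.gSymm]

lemma sum_G1 (hPΩ : Q.P Ω = -Ω)
    (hcl : ∀ a b, Q.g (Q.nabla a Ω) b = Q.g (Q.nabla b Ω) a)
    (hθΩ : Q.theta Ω = Q.g Ω Ω) :
    ∑ i, Q.g (Q.nabla (Q.e' i) Ω) (Q.P (Q.e i)) = - Q.divg Ω - Q.g Ω Ω := by
  have step : ∀ i, Q.g (Q.nabla (Q.e' i) Ω) (Q.P (Q.e i))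
      = - Q.g (Q.nabla (Q.e' i) Ω) (Q.e i) - Q.F (Q.e' i) (Q.e i) Ω :=
    fun i => Q.Pid Ω hPΩ _ _
  rw [Finset.sum_congr rfl fun i _ => step i, Finset.sum_sub_distrib]
  rw [show (∑ i, -Q.g (Q.nabla (Q.e' i) Ω) (Q.e i))
      = -∑ i, Q.g (Q.nabla (Q.e' i) Ω) (Q.e i) from Finset.sum_neg_distrib _]
  rw [Q.sum_divg Ω hcl]
  have : (∑ i, Q.F (Q.e' i) (Q.e i) Ω) = Q.theta Ω := rfl
  rw [this, hθΩ]

end W3sec2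
section W3sec3

variable (κ : Q.C) (Ω : Q.V)

lemma FS7a
    (hF : ∀ a b c, Q.F a b c = κ * ((Q.g a b + Q.g a (Q.P b)) * Q.g Ω c
      + (Q.g a c + Q.g a (Q.P c)) * Q.g Ω b))
    (hPΩ : Q.P Ω = -Ω) (htr : Q.trP = 0) (y : Q.V) :
    ∑ i, Q.F (Q.e' i) y (Q.P (Q.e i)) = κ * (((m : ℕ) : Q.C) * Q.g Ω y) := by
  have expand : ∀ i, Q.F (Q.e' i) y (Q.P (Q.e i))
      = κ * (-((Q.g (Q.e' i) y + Q.g (Q.e' i) (Q.P y)) * Q.g Ω (Q.e i))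
        + (Q.g (Q.e' i) (Q.P (Q.e i)) + Q.g (Q.e' i) (Q.e i)) * Q.g Ω y) := by
    intro i
    rw [hF, Q.gΩP Ω hPΩ, Q.Pinvol]
    ring
  rw [Finset.sum_congr rfl fun i _ => expand i, ← Finset.mul_sum]
  congr 1
  have c1 := Q.contract_e (fun v => Q.g Ω v) (fun a b => Q.g_add₂ Ω a b)
    (fun c a => Q.g_smul₂ c Ω a) y
  have c2 := Q.contract_e (fun v => Q.g Ω v) (fun a b => Q.g_add₂ Ω a b)
    (fun c a => Q.g_smul₂ c Ω a) (Q.P y)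
  calc ∑ i, (-((Q.g (Q.e' i) y + Q.g (Q.e' i) (Q.P y)) * Q.g Ω (Q.e i))
        + (Q.g (Q.e' i) (Q.P (Q.e i)) + Q.g (Q.e' i) (Q.e i)) * Q.g Ω y)
      = ∑ i, ((-(Q.g (Q.e' i) y * Q.g Ω (Q.e i)) + -(Q.g (Q.e' i) (Q.P y) * Q.g Ω (Q.e i)))
        + (Q.g (Q.e' i) (Q.P (Q.e i)) * Q.g Ω y + Q.g (Q.e' i) (Q.e i) * Q.g Ω y)) :=
        Finset.sum_congr rfl fun i _ => by ring
    _ = ((∑ i, -(Q.g (Q.e' i) y * Q.g Ω (Q.e i)))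
          + ∑ i, -(Q.g (Q.e' i) (Q.P y) * Q.g Ω (Q.e i)))
        + ((∑ i, Q.g (Q.e' i) (Q.P (Q.e i)) * Q.g Ω y)
          + ∑ i, Q.g (Q.e' i) (Q.e i) * Q.g Ω y) := by
        rw [Finset.sum_add_distrib, Finset.sum_add_distrib, Finset.sum_add_distrib]
    _ = ((m : ℕ) : Q.C) * Q.g Ω y := by
        rw [Finset.sum_neg_distrib, Finset.sum_neg_distrib, c1, c2,
          ← Finset.sum_mul, ← Finset.sum_mul, Q.sum_trP htr, Q.sum_diag,
          Q.gΩP Ω hPΩ]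
        ring

end W3sec3
section W3sec4

variable (κ : Q.C) (Ω : Q.V)

lemma FS7b
    (hF : ∀ a b c, Q.F a b c = κ * ((Q.g a b + Q.g a (Q.P b)) * Q.g Ω c
      + (Q.g a c + Q.g a (Q.P c)) * Q.g Ω b))
    (hPΩ : Q.P Ω = -Ω) (y : Q.V) :
    ∑ i, Q.F y (Q.e' i) (Q.P (Q.e i)) = 0 := by
  have expand : ∀ i, Q.F y (Q.e' i) (Q.P (Q.e i))
      = κ * (-(Q.g (Q.e i) Ω * Q.g y (Q.e' i)) + -(Q.g (Q.e i) Ω * Q.g y (Q.P (Q.e' i)))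
        + Q.g (Q.e i) (Q.P y) * Q.g Ω (Q.e' i) + Q.g (Q.e i) y * Q.g Ω (Q.e' i)) := by
    intro i
    rw [hF, Q.gΩP Ω hPΩ, Q.Pinvol, Q.gSymm Ω (Q.e i), Q.gP₂ y (Q.e i),
      Q.gSymm (Q.P y) (Q.e i), Q.gSymm y (Q.e i)]
    ring
  rw [Finset.sum_congr rfl fun i _ => expand i, ← Finset.mul_sum]
  have c1 := Q.contract_e' (fun v => Q.g y v) (fun a b => Q.g_add₂ y a b)
    (fun c a => Q.g_smul₂ c y a) Ω
  have c2 := Q.contract_e' (fun v => Q.g y (Q.P v))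
    (fun a b => by simp only [map_add, Q.g_add₂])
    (fun c a => by simp only [map_smul, Q.g_smul₂]) Ω
  have c3 := Q.contract_e' (fun v => Q.g Ω v) (fun a b => Q.g_add₂ Ω a b)
    (fun c a => Q.g_smul₂ c Ω a) (Q.P y)
  have c4 := Q.contract_e' (fun v => Q.g Ω v) (fun a b => Q.g_add₂ Ω a b)
    (fun c a => Q.g_smul₂ c Ω a) y
  have split : ∑ i, (-(Q.g (Q.e i) Ω * Q.g y (Q.e' i)) + -(Q.g (Q.e i) Ω * Q.g y (Q.P (Q.e' i)))
        + Q.g (Q.e i) (Q.P y) * Q.g Ω (Q.e' i) + Q.g (Q.e i) y * Q.g Ω (Q.e' i))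
      = (((∑ i, -(Q.g (Q.e i) Ω * Q.g y (Q.e' i)))
        + ∑ i, -(Q.g (Q.e i) Ω * Q.g y (Q.P (Q.e' i))))
        + ∑ i, Q.g (Q.e i) (Q.P y) * Q.g Ω (Q.e' i))
        + ∑ i, Q.g (Q.e i) y * Q.g Ω (Q.e' i) := by
    rw [Finset.sum_add_distrib, Finset.sum_add_distrib, Finset.sum_add_distrib]
  rw [split, Finset.sum_neg_distrib, Finset.sum_neg_distrib, c1, c2, c3, c4,
    Q.gΩP Ω hPΩ, hPΩ, Q.g_neg₂]
  ring

lemma sumNF1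
    (hF : ∀ a b c, Q.F a b c = κ * ((Q.g a b + Q.g a (Q.P b)) * Q.g Ω c
      + (Q.g a c + Q.g a (Q.P c)) * Q.g Ω b))
    (hDκ : ∀ u, Q.D u κ = 0) (hPΩ : Q.P Ω = -Ω)
    (hcl : ∀ a b, Q.g (Q.nabla a Ω) b = Q.g (Q.nabla b Ω) a)
    (hθΩ : Q.theta Ω = Q.g Ω Ω) (htr : Q.trP = 0) (y z : Q.V) :
    ∑ i, Q.nablaF (Q.e' i) y z (Q.P (Q.e i))
      = κ * ((Q.g y z + Q.g y (Q.P z)) * (- Q.divg Ω - Q.g Ω Ω))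
        + κ * (-(κ * ((Q.g y z + Q.g y (Q.P z)) * Q.g Ω Ω)))
        + κ * (Q.g Ω z * (κ * (((m : ℕ) : Q.C) * Q.g Ω y))) := by
  rw [Finset.sum_congr rfl fun i _ => Q.nablaF_W3 κ Ω hF hDκ (Q.e' i) y z (Q.P (Q.e i))]
  have split : ∀ (f1 f2 f3 f4 : Fin m → Q.C),
      (∑ i, (f1 i + f2 i + f3 i + f4 i))
        = (∑ i, f1 i) + (∑ i, f2 i) + (∑ i, f3 i) + (∑ i, f4 i) := by
    intro f1 f2 f3 f4
    rw [Finset.sum_add_distrib, Finset.sum_add_distrib, Finset.sum_add_distrib]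
  rw [split]
  -- piece 1
  have hP1 : ∑ i, κ * ((Q.g y (Q.nabla (Q.e' i) (Q.P z)) - Q.g y (Q.P (Q.nabla (Q.e' i) z)))
      * Q.g Ω (Q.P (Q.e i))) = 0 := by
    have expand : ∀ i, κ * ((Q.g y (Q.nabla (Q.e' i) (Q.P z))
        - Q.g y (Q.P (Q.nabla (Q.e' i) z))) * Q.g Ω (Q.P (Q.e i)))
        = -κ * (Q.g (Q.e i) Ω * Q.F (Q.e' i) z y) := by
      intro i
      rw [← Q.Fval, Q.gΩP Ω hPΩ, Q.gSymm Ω (Q.e i)]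
      ring
    rw [Finset.sum_congr rfl fun i _ => expand i, ← Finset.mul_sum]
    have c := Q.contract_e' (fun v => Q.F v z y) (fun a b => Q.F_add₁ a b z y)
      (fun c a => Q.F_smul₁ c a z y) Ω
    rw [c, Q.FΩ1 κ Ω hF hPΩ, mul_zero]
  -- piece 2
  have hP2 : ∑ i, κ * ((Q.g y z + Q.g y (Q.P z)) * Q.g (Q.nabla (Q.e' i) Ω) (Q.P (Q.e i)))
      = κ * ((Q.g y z + Q.g y (Q.P z)) * (- Q.divg Ω - Q.g Ω Ω)) := by
    have expand : ∀ i, κ * ((Q.g y z + Q.g y (Q.P z)) * Q.g (Q.nabla (Q.e' i) Ω) (Q.P (Q.e i)))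
        = (κ * (Q.g y z + Q.g y (Q.P z))) * Q.g (Q.nabla (Q.e' i) Ω) (Q.P (Q.e i)) := by
      intro i; ring
    rw [Finset.sum_congr rfl fun i _ => expand i, ← Finset.mul_sum,
      Q.sum_G1 Ω hPΩ hcl hθΩ]
    ring
  -- piece 3
  have hP3 : ∑ i, κ * (Q.g (Q.nabla (Q.e' i) Ω) z * (Q.g y (Q.P (Q.e i)) + Q.g y (Q.P (Q.P (Q.e i)))))
      = κ * (-(κ * ((Q.g y z + Q.g y (Q.P z)) * Q.g Ω Ω))) := by
    have expand : ∀ i, κ * (Q.g (Q.nabla (Q.e' i) Ω) z * (Q.g y (Q.P (Q.e i)) + Q.g y (Q.P (Q.P (Q.e i)))))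
        = κ * (Q.g (Q.e i) (Q.P y) * Q.g (Q.nabla (Q.e' i) Ω) z
          + Q.g (Q.e i) y * Q.g (Q.nabla (Q.e' i) Ω) z) := by
      intro i
      rw [Q.Pinvol, Q.gP₂ y (Q.e i), Q.gSymm (Q.P y) (Q.e i), Q.gSymm y (Q.e i)]
      ring
    rw [Finset.sum_congr rfl fun i _ => expand i, ← Finset.mul_sum]
    have c1 := Q.contract_e' (fun v => Q.g (Q.nabla v Ω) z)
      (fun a b => by rw [Q.nabla_add₁, Q.g_add₁])
      (fun c a => by rw [Q.nabla_smul₁, Q.g_smul₁]) (Q.P y)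
    have c2 := Q.contract_e' (fun v => Q.g (Q.nabla v Ω) z)
      (fun a b => by rw [Q.nabla_add₁, Q.g_add₁])
      (fun c a => by rw [Q.nabla_smul₁, Q.g_smul₁]) y
    rw [Finset.sum_add_distrib, c1, c2]
    -- value: g(∇_{Py}Ω, z) + g(∇yΩ, z) = -(κ*((gyz+gyPz)*gΩΩ))
    have v1 : Q.g (Q.nabla (Q.P y) Ω) z = Q.g (Q.nabla z Ω) (Q.P y) := hcl _ _
    have v2 : Q.g (Q.nabla z Ω) (Q.P y) = - Q.g (Q.nabla z Ω) y - Q.F z y Ω :=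
      Q.Pid Ω hPΩ z y
    have v3 : Q.g (Q.nabla z Ω) y = Q.g (Q.nabla y Ω) z := hcl _ _
    have v4 : Q.F z y Ω = κ * ((Q.g z y + Q.g z (Q.P y)) * Q.g Ω Ω) :=
      Q.FΩ3 κ Ω hF hPΩ z y
    have v5 : Q.g z y = Q.g y z := Q.gSymm _ _
    have v6 : Q.g z (Q.P y) = Q.g y (Q.P z) := by
      rw [Q.gP₂ z y, Q.gSymm (Q.P z) y]
    linear_combination κ * v1 + κ * v2 - κ * v3 - κ * v4 - κ * κ * Q.g Ω Ω * v5
      - κ * κ * Q.g Ω Ω * v6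
  -- piece 4
  have hP4 : ∑ i, κ * ((Q.g y (Q.nabla (Q.e' i) (Q.P (Q.P (Q.e i))))
        - Q.g y (Q.P (Q.nabla (Q.e' i) (Q.P (Q.e i))))) * Q.g Ω z)
      = κ * (Q.g Ω z * (κ * (((m : ℕ) : Q.C) * Q.g Ω y))) := by
    have expand : ∀ i, κ * ((Q.g y (Q.nabla (Q.e' i) (Q.P (Q.P (Q.e i))))
          - Q.g y (Q.P (Q.nabla (Q.e' i) (Q.P (Q.e i))))) * Q.g Ω z)
        = (κ * Q.g Ω z) * Q.F (Q.e' i) y (Q.P (Q.e i)) := by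
      intro i
      rw [← Q.Fval (Q.e' i) (Q.P (Q.e i)) y, Q.F_sym23]
      ring
    rw [Finset.sum_congr rfl fun i _ => expand i, ← Finset.mul_sum,
      Q.FS7a κ Ω hF hPΩ htr y]
    ring
  rw [hP1, hP2, hP3, hP4]
  ring
end W3sec4
section W3sec5

variable (κ : Q.C) (Ω : Q.V)

lemma sumNF2
    (hF : ∀ a b c, Q.F a b c = κ * ((Q.g a b + Q.g a (Q.P b)) * Q.g Ω c
      + (Q.g a c + Q.g a (Q.P c)) * Q.g Ω b))
    (hDκ : ∀ u, Q.D u κ = 0) (hPΩ : Q.P Ω = -Ω)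
    (hcl : ∀ a b, Q.g (Q.nabla a Ω) b = Q.g (Q.nabla b Ω) a)
    (htr : Q.trP = 0) (y z : Q.V) :
    ∑ i, Q.nablaF y (Q.e' i) z (Q.P (Q.e i))
      = -(κ * (κ * ((Q.g y z + Q.g y (Q.P z)) * Q.g Ω Ω)))
        + κ * (-(κ * ((Q.g y z + Q.g y (Q.P z)) * Q.g Ω Ω)))
        + κ * (Q.g (Q.nabla y Ω) z * ((m : ℕ) : Q.C)) := by
  rw [Finset.sum_congr rfl fun i _ => Q.nablaF_W3 κ Ω hF hDκ y (Q.e' i) z (Q.P (Q.e i))]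
  have split : ∀ (f1 f2 f3 f4 : Fin m → Q.C),
      (∑ i, (f1 i + f2 i + f3 i + f4 i))
        = (∑ i, f1 i) + (∑ i, f2 i) + (∑ i, f3 i) + (∑ i, f4 i) := by
    intro f1 f2 f3 f4
    rw [Finset.sum_add_distrib, Finset.sum_add_distrib, Finset.sum_add_distrib]
  rw [split]
  -- piece 1
  have hQ1 : ∑ i, κ * ((Q.g (Q.e' i) (Q.nabla y (Q.P z)) - Q.g (Q.e' i) (Q.P (Q.nabla y z)))
      * Q.g Ω (Q.P (Q.e i)))
      = -(κ * (κ * ((Q.g y z + Q.g y (Q.P z)) * Q.g Ω Ω))) := by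
    have expand : ∀ i, κ * ((Q.g (Q.e' i) (Q.nabla y (Q.P z)) - Q.g (Q.e' i) (Q.P (Q.nabla y z)))
        * Q.g Ω (Q.P (Q.e i)))
        = -κ * (Q.g (Q.e i) Ω * (Q.g (Q.e' i) (Q.nabla y (Q.P z))
          - Q.g (Q.e' i) (Q.P (Q.nabla y z)))) := by
      intro i
      rw [Q.gΩP Ω hPΩ, Q.gSymm Ω (Q.e i)]
      ring
    rw [Finset.sum_congr rfl fun i _ => expand i, ← Finset.mul_sum]
    have c := Q.contract_e' (fun v => Q.g v (Q.nabla y (Q.P z)) - Q.g v (Q.P (Q.nabla y z)))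
      (fun a b => by rw [Q.g_add₁, Q.g_add₁]; ring)
      (fun c a => by rw [Q.g_smul₁, Q.g_smul₁]; ring) Ω
    rw [c]
    have hval : Q.g Ω (Q.nabla y (Q.P z)) - Q.g Ω (Q.P (Q.nabla y z)) = Q.F y z Ω := by
      unfold F
      rw [Q.g_sub₁, Q.gSymm Ω (Q.nabla y (Q.P z)), Q.gSymm Ω (Q.P (Q.nabla y z))]
    rw [hval, Q.FΩ3 κ Ω hF hPΩ y z]
    ring
  -- piece 2
  have hQ2 : ∑ i, κ * ((Q.g (Q.e' i) z + Q.g (Q.e' i) (Q.P z)) * Q.g (Q.nabla y Ω) (Q.P (Q.e i)))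
      = κ * (-(κ * ((Q.g y z + Q.g y (Q.P z)) * Q.g Ω Ω))) := by
    have expand : ∀ i, κ * ((Q.g (Q.e' i) z + Q.g (Q.e' i) (Q.P z)) * Q.g (Q.nabla y Ω) (Q.P (Q.e i)))
        = κ * (Q.g (Q.e' i) z * Q.g (Q.nabla y Ω) (Q.P (Q.e i))
          + Q.g (Q.e' i) (Q.P z) * Q.g (Q.nabla y Ω) (Q.P (Q.e i))) := by
      intro i; ring
    rw [Finset.sum_congr rfl fun i _ => expand i, ← Finset.mul_sum]
    have c1 := Q.contract_e (fun v => Q.g (Q.nabla y Ω) (Q.P v))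
      (fun a b => by simp only [map_add, Q.g_add₂])
      (fun c a => by simp only [map_smul, Q.g_smul₂]) z
    have c2 := Q.contract_e (fun v => Q.g (Q.nabla y Ω) (Q.P v))
      (fun a b => by simp only [map_add, Q.g_add₂])
      (fun c a => by simp only [map_smul, Q.g_smul₂]) (Q.P z)
    rw [Finset.sum_add_distrib, c1, c2, Q.Pinvol]
    have v2 : Q.g (Q.nabla y Ω) (Q.P z) = - Q.g (Q.nabla y Ω) z - Q.F y z Ω :=
      Q.Pid Ω hPΩ y z
    have v4 : Q.F y z Ω = κ * ((Q.g y z + Q.g y (Q.P z)) * Q.g Ω Ω) :=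
      Q.FΩ3 κ Ω hF hPΩ y z
    linear_combination κ * v2 - κ * v4
  -- piece 3
  have hQ3 : ∑ i, κ * (Q.g (Q.nabla y Ω) z * (Q.g (Q.e' i) (Q.P (Q.e i)) + Q.g (Q.e' i) (Q.P (Q.P (Q.e i)))))
      = κ * (Q.g (Q.nabla y Ω) z * ((m : ℕ) : Q.C)) := by
    have expand : ∀ i, κ * (Q.g (Q.nabla y Ω) z * (Q.g (Q.e' i) (Q.P (Q.e i)) + Q.g (Q.e' i) (Q.P (Q.P (Q.e i)))))
        = (κ * Q.g (Q.nabla y Ω) z) * (Q.g (Q.e' i) (Q.P (Q.e i)) + Q.g (Q.e' i) (Q.e i)) := by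
      intro i; rw [Q.Pinvol]; ring
    rw [Finset.sum_congr rfl fun i _ => expand i, ← Finset.mul_sum,
      Finset.sum_add_distrib, Q.sum_trP htr, Q.sum_diag]
    ring
  -- piece 4
  have hQ4 : ∑ i, κ * ((Q.g (Q.e' i) (Q.nabla y (Q.P (Q.P (Q.e i))))
        - Q.g (Q.e' i) (Q.P (Q.nabla y (Q.P (Q.e i))))) * Q.g Ω z) = 0 := by
    have expand : ∀ i, κ * ((Q.g (Q.e' i) (Q.nabla y (Q.P (Q.P (Q.e i))))
          - Q.g (Q.e' i) (Q.P (Q.nabla y (Q.P (Q.e i))))) * Q.g Ω z)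
        = (κ * Q.g Ω z) * Q.F y (Q.e' i) (Q.P (Q.e i)) := by
      intro i
      have hv : Q.F y (Q.P (Q.e i)) (Q.e' i)
          = Q.g (Q.e' i) (Q.nabla y (Q.P (Q.P (Q.e i))))
            - Q.g (Q.e' i) (Q.P (Q.nabla y (Q.P (Q.e i)))) := Q.Fval y (Q.P (Q.e i)) (Q.e' i)
      rw [← hv, Q.F_sym23]
      ring
    rw [Finset.sum_congr rfl fun i _ => expand i, ← Finset.mul_sum,
      Q.FS7b κ Ω hF hPΩ y, mul_zero]
  rw [hQ1, hQ2, hQ3, hQ4]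
  ring

end W3sec5
section Lin

lemma R_smul₃ (x y z : Q.V) (c : Q.C) : Q.R x y (c • z) = c • Q.R x y z := by
  unfold R
  rw [Q.nabla_leibniz y c z, Q.nabla_leibniz x c z, Q.nabla_add₂, Q.nabla_add₂,
    Q.nabla_leibniz x (Q.D y c) z, Q.nabla_leibniz x c (Q.nabla y z),
    Q.nabla_leibniz y (Q.D x c) z, Q.nabla_leibniz y c (Q.nabla x z),
    Q.nabla_leibniz (Q.bracket x y) c z, Q.bracketD]
  module

lemma Rm_smul₃ (x y z w : Q.V) (c : Q.C) : Q.Rm x y (c • z) w = c * Q.Rm x y z w := by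
  unfold Rm
  rw [Q.R_smul₃, Q.g_smul₁]

lemma Rm_add₄ (x y z w u : Q.V) : Q.Rm x y z (w + u) = Q.Rm x y z w + Q.Rm x y z u :=
  Q.g_add₂ _ _ _

lemma Rm_smul₄ (x y z w : Q.V) (c : Q.C) : Q.Rm x y z (c • w) = c * Q.Rm x y z w :=
  Q.g_smul₂ _ _ _

lemma Rm_add₁ (x x' y z w : Q.V) :
    Q.Rm (x + x') y z w = Q.Rm x y z w + Q.Rm x' y z w := by
  rw [Q.Rm_pair (x + x') y z w, Q.Rm_add₃, Q.Rm_pair x y, Q.Rm_pair x' y]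

lemma Rm_smul₁ (x y z w : Q.V) (c : Q.C) : Q.Rm (c • x) y z w = c * Q.Rm x y z w := by
  rw [Q.Rm_pair (c • x) y z w, Q.Rm_smul₃, Q.Rm_pair x y]

end Lin
section Star

lemma Rm_add₂ (x y y' z w : Q.V) :
    Q.Rm x (y + y') z w = Q.Rm x y z w + Q.Rm x y' z w := by
  rw [Q.Rm_swap12 x (y + y') z w, Q.Rm_add₁, Q.Rm_swap12 y x, Q.Rm_swap12 y' x]
  ring

lemma Rm_smul₂ (x y z w : Q.V) (c : Q.C) : Q.Rm x (c • y) z w = c * Q.Rm x y z w := by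
  rw [Q.Rm_swap12 x (c • y) z w, Q.Rm_smul₁, Q.Rm_swap12 y x]
  ring

lemma scalStar_K (K : Q.V → Q.V → Q.V → Q.V → Q.C)
    (hK : ∀ x y z w, K x y z w =
      ((1 : ℝ)/2) • (Q.Rm x y z w + Q.Rm x y (Q.P z) (Q.P w))) :
    Q.scalStar K = Q.scalStar Q.Rm := by
  have step1 : Q.scalStar K = ∑ i, ∑ j,
      ((1:ℝ)/2) • (Q.Rm (Q.e' j) (Q.e i) (Q.e' i) (Q.P (Q.e j))
        + Q.Rm (Q.e' j) (Q.e i) (Q.P (Q.e' i)) (Q.e j)) := by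
    rw [show Q.scalStar K = ∑ i, ∑ j, K (Q.e' j) (Q.e i) (Q.e' i) (Q.P (Q.e j)) from rfl]
    refine Finset.sum_congr rfl fun i _ => Finset.sum_congr rfl fun j _ => ?_
    rw [hK, Q.Pinvol]
  have pull : ∀ (f : Fin m → Fin m → Q.C),
      (∑ i, ∑ j, ((1:ℝ)/2) • f i j) = ((1:ℝ)/2) • ∑ i, ∑ j, f i j := by
    intro f
    rw [Finset.smul_sum]
    exact Finset.sum_congr rfl fun i _ => (Finset.smul_sum).symm
  rw [step1, pull]
  have split : (∑ i, ∑ j, (Q.Rm (Q.e' j) (Q.e i) (Q.e' i) (Q.P (Q.e j))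
        + Q.Rm (Q.e' j) (Q.e i) (Q.P (Q.e' i)) (Q.e j)))
      = (∑ i, ∑ j, Q.Rm (Q.e' j) (Q.e i) (Q.e' i) (Q.P (Q.e j)))
        + ∑ i, ∑ j, Q.Rm (Q.e' j) (Q.e i) (Q.P (Q.e' i)) (Q.e j) := by
    rw [← Finset.sum_add_distrib]
    exact Finset.sum_congr rfl fun i _ => Finset.sum_add_distrib
  rw [split]
  have hfirst : (∑ i, ∑ j, Q.Rm (Q.e' j) (Q.e i) (Q.e' i) (Q.P (Q.e j)))
      = Q.scalStar Q.Rm := rfl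
  have hsecond : (∑ i, ∑ j, Q.Rm (Q.e' j) (Q.e i) (Q.P (Q.e' i)) (Q.e j))
      = Q.scalStar Q.Rm := by
    have stepA : (∑ i, ∑ j, Q.Rm (Q.e' j) (Q.e i) (Q.P (Q.e' i)) (Q.e j))
        = ∑ i, ∑ j, Q.Rm (Q.P (Q.e' i)) (Q.e j) (Q.e' j) (Q.e i) :=
      Finset.sum_congr rfl fun i _ => Finset.sum_congr rfl fun j _ =>
        Q.Rm_pair _ _ _ _
    have stepB : (∑ i, ∑ j, Q.Rm (Q.P (Q.e' i)) (Q.e j) (Q.e' j) (Q.e i))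
        = ∑ i, ∑ j, Q.Rm (Q.P (Q.e i)) (Q.e j) (Q.e' j) (Q.e' i) := by
      refine Q.tr_swap (fun u v => ∑ j, Q.Rm (Q.P u) (Q.e j) (Q.e' j) v) ?_ ?_ ?_ ?_
      · intro a b c
        simp only [map_add, Q.Rm_add₁, Finset.sum_add_distrib]
      · intro f a c
        simp only [map_smul, Q.Rm_smul₁]
        rw [← Finset.mul_sum]
      · intro a b c
        simp only [Q.Rm_add₄, Finset.sum_add_distrib]
      · intro f a c
        simp only [Q.Rm_smul₄]
        rw [← Finset.mul_sum]
    have stepC : (∑ i, ∑ j, Q.Rm (Q.P (Q.e i)) (Q.e j) (Q.e' j) (Q.e' i))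
        = ∑ i, ∑ j, Q.Rm (Q.P (Q.e i)) (Q.e' j) (Q.e j) (Q.e' i) := by
      refine Finset.sum_congr rfl fun i _ => ?_
      refine (Q.tr_swap (fun u v => Q.Rm (Q.P (Q.e i)) u v (Q.e' i)) ?_ ?_ ?_ ?_).symm
      · intro a b c; simp only [Q.Rm_add₂]
      · intro f a c; simp only [Q.Rm_smul₂]
      · intro a b c; simp only [Q.Rm_add₃]
      · intro f a c; simp only [Q.Rm_smul₃]
    have stepD : (∑ i, ∑ j, Q.Rm (Q.P (Q.e i)) (Q.e' j) (Q.e j) (Q.e' i))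
        = ∑ j, ∑ i, Q.Rm (Q.P (Q.e i)) (Q.e' j) (Q.e j) (Q.e' i) := Finset.sum_comm
    have stepE : (∑ j, ∑ i, Q.Rm (Q.P (Q.e i)) (Q.e' j) (Q.e j) (Q.e' i))
        = Q.scalStar Q.Rm := by
      rw [show Q.scalStar Q.Rm
          = ∑ j, ∑ i, Q.Rm (Q.e' i) (Q.e j) (Q.e' j) (Q.P (Q.e i)) from rfl]
      refine Finset.sum_congr rfl fun j _ => Finset.sum_congr rfl fun i _ => ?_
      -- Rm (P e_i) (e'_j) (e_j) (e'_i) = Rm (e'_i) (e_j) (e'_j) (P e_i)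
      have p1 : Q.Rm (Q.e' i) (Q.e j) (Q.e' j) (Q.P (Q.e i))
          = Q.Rm (Q.e' j) (Q.P (Q.e i)) (Q.e' i) (Q.e j) := Q.Rm_pair _ _ _ _
      have p2 : Q.Rm (Q.e' j) (Q.P (Q.e i)) (Q.e' i) (Q.e j)
          = - Q.Rm (Q.P (Q.e i)) (Q.e' j) (Q.e' i) (Q.e j) := Q.Rm_swap12 _ _ _ _
      have p3 : Q.Rm (Q.P (Q.e i)) (Q.e' j) (Q.e' i) (Q.e j)
          = - Q.Rm (Q.P (Q.e i)) (Q.e' j) (Q.e j) (Q.e' i) := Q.Rm_swap34 _ _ _ _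
      linear_combination -p1 - p2 + p3
    rw [stepA, stepB, stepC, stepD, stepE]
  rw [hfirst, hsecond]
  rw [show Q.scalStar Q.Rm + Q.scalStar Q.Rm = 2 * Q.scalStar Q.Rm from by ring,
    Algebra.smul_def, show ((2:Q.C)) = algebraMap ℝ Q.C 2 from (map_ofNat _ 2).symm,
    ← mul_assoc, ← map_mul]
  norm_num

end Star

end Aux
end RAPM

open RAPM in
/-- On a `W̄₃`-manifold of dimension `2n` with closed `θ`, for
`K = (1/2){R + R(·,·,P·,P·)}`:
`ρ(K) = ρ - (1/4n){[tr A + θ(Ω)][g + g̃] + 2nA}`,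
`τ(K) = τ - div Ω - ((n-1)/2n)θ(Ω)` and `τ*(K) = τ*`. -/
theorem statement14 {n : ℕ} (hn : 0 < n) (Q : RAPM (2*n)) (htr : Q.trP = 0)
    (hW : Q.W3) (hθ : Q.closed) (Ω : Q.V) (hΩ : ∀ x, Q.g Ω x = Q.theta x)
    (A : Q.V → Q.V → Q.C)
    (hA : ∀ y z, A y z =
      Q.nablaTheta y z - ((1 : ℝ)/(2*(n : ℝ))) • (Q.theta y * Q.theta z))
    (K : Q.V → Q.V → Q.V → Q.V → Q.C)
    (hK : ∀ x y z w, K x y z w =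
      ((1 : ℝ)/2) • (Q.Rm x y z w + Q.Rm x y (Q.P z) (Q.P w))) :
    (∀ y z, Q.ric K y z = Q.ric Q.Rm y z -
      ((1 : ℝ)/(4*(n : ℝ))) •
        ((Q.trB A + Q.theta Ω) * (Q.g y z + Q.g y (Q.P z)) +
          (2*(n : ℝ)) • A y z)) ∧
    Q.scal K = Q.scal Q.Rm - Q.divg Ω -
      (((n : ℝ) - 1)/(2*(n : ℝ))) • Q.theta Ω ∧
    Q.scalStar K = Q.scalStar Q.Rm := by
  obtain ⟨hW1, hW2⟩ := hW
  have i0 : Fin (2*n) := ⟨0, by omega⟩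
  have hnR : (n : ℝ) ≠ 0 := Nat.cast_ne_zero.mpr (by omega)
  have hn0 : ((2*n : ℕ) : ℝ) ≠ 0 := Nat.cast_ne_zero.mpr (by omega)
  set κ := algebraMap ℝ Q.C ((1:ℝ)/((2*n : ℕ) : ℝ)) with hκdef
  have hκ : κ * (((2*n : ℕ)) : Q.C) = 1 := by
    rw [hκdef, show (((2*n : ℕ)) : Q.C) = algebraMap ℝ Q.C (((2*n:ℕ)):ℝ)
        from (map_natCast _ _).symm, ← map_mul, one_div, inv_mul_cancel₀ hn0, map_one]
  have hθg : ∀ v, Q.theta v = Q.g Ω v := fun v => (hΩ v).symm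
  have hF : ∀ a b c, Q.F a b c = κ * ((Q.g a b + Q.g a (Q.P b)) * Q.g Ω c
      + (Q.g a c + Q.g a (Q.P c)) * Q.g Ω b) := by
    intro a b c
    rw [hW1 a b c, Algebra.smul_def, hθg b, hθg c, hκdef]
  have hPΩ : Q.P Ω = -Ω := by
    refine Q.ext_coeff fun i => ?_
    rw [Q.g_neg₂, Q.gP₂ (Q.e' i) Ω, Q.gSymm (Q.P (Q.e' i)) Ω, hΩ (Q.P (Q.e' i)),
      hW2, ← hΩ (Q.e' i), Q.gSymm Ω (Q.e' i)]
  have hDκ : ∀ u, Q.D u κ = 0 := fun u => Q.D_inv i0 κ hκ u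
  have hnt : ∀ a b, Q.nablaTheta a b = Q.g (Q.nabla a Ω) b := by
    intro a b
    show Q.D a (Q.theta b) - Q.theta (Q.nabla a b) = _
    rw [← hΩ b, ← hΩ (Q.nabla a b), Q.nabla_metric]
    ring
  have hcl : ∀ a b, Q.g (Q.nabla a Ω) b = Q.g (Q.nabla b Ω) a := by
    intro a b
    rw [← hnt, ← hnt]
    exact hθ a b
  have hθΩ : Q.theta Ω = Q.g Ω Ω := (hΩ Ω).symm
  have hκeq : algebraMap ℝ Q.C ((1:ℝ)/(2*(n:ℝ))) = κ := by
    rw [hκdef]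
    congr 1
    push_cast
    ring
  have hA' : ∀ a b, A a b = Q.g (Q.nabla a Ω) b - κ * (Q.g Ω a * Q.g Ω b) := by
    intro a b
    rw [hA, hnt, Algebra.smul_def, hκeq, ← hΩ a, ← hΩ b]
  have htrA : Q.trB A = Q.divg Ω - κ * Q.g Ω Ω := by
    rw [show Q.trB A = ∑ i, A (Q.e i) (Q.e' i) from rfl,
      Finset.sum_congr rfl fun i _ => hA' (Q.e i) (Q.e' i), Finset.sum_sub_distrib]
    congr 1
    · rw [show Q.divg Ω = ∑ i, Q.g (Q.e' i) (Q.nabla (Q.e i) Ω) from rfl]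
      exact Finset.sum_congr rfl fun i _ => Q.gSymm _ _
    · rw [Finset.sum_congr rfl fun i (_ : i ∈ Finset.univ) =>
        (by rw [Q.gSymm Ω (Q.e i)] :
          κ * (Q.g Ω (Q.e i) * Q.g Ω (Q.e' i)) = κ * (Q.g (Q.e i) Ω * Q.g Ω (Q.e' i))),
        ← Finset.mul_sum]
      have c := Q.contract_e' (fun v => Q.g Ω v) (fun a b => Q.g_add₂ Ω a b)
        (fun c a => Q.g_smul₂ c Ω a) Ω
      rw [c]
  have hα2 : (2:Q.C) * algebraMap ℝ Q.C ((1:ℝ)/2) = 1 := by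
    rw [show ((2:Q.C)) = algebraMap ℝ Q.C 2 from (map_ofNat _ 2).symm, ← map_mul]
    norm_num
  have hMM : (((2*n : ℕ)) : Q.C) = algebraMap ℝ Q.C (2*(n:ℝ)) := by
    rw [show (2*(n:ℝ)) = (((2*n:ℕ)):ℝ) from by push_cast; ring, map_natCast]
  have hβ : algebraMap ℝ Q.C ((1:ℝ)/(4*(n:ℝ))) = algebraMap ℝ Q.C ((1:ℝ)/2) * κ := by
    rw [hκdef, ← map_mul]
    congr 1
    push_cast
    field_simp
    try ring
  have hγ : algebraMap ℝ Q.C (((n:ℝ)-1)/(2*(n:ℝ)))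
      = algebraMap ℝ Q.C ((1:ℝ)/2) - κ := by
    rw [hκdef, ← map_sub]
    congr 1
    push_cast
    field_simp
    try ring
  have part1 : ∀ y z, Q.ric K y z = Q.ric Q.Rm y z -
      ((1 : ℝ)/(4*(n : ℝ))) • ((Q.trB A + Q.theta Ω) * (Q.g y z + Q.g y (Q.P z)) +
        (2*(n : ℝ)) • A y z) := by
    intro y z
    have hS1 := Q.sumNF1 κ Ω hF hDκ hPΩ hcl hθΩ htr y z
    have hS2 := Q.sumNF2 κ Ω hF hDκ hPΩ hcl htr y z
    have expand : ∀ i, K (Q.e' i) y z (Q.e i)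
        = ((1:ℝ)/2) • (Q.Rm (Q.e' i) y z (Q.e i)
          + (Q.Rm (Q.e' i) y z (Q.e i) + Q.nablaF (Q.e' i) y z (Q.P (Q.e i))
            - Q.nablaF y (Q.e' i) z (Q.P (Q.e i)))) := by
      intro i
      rw [hK, Q.ricciP (Q.e' i) y z (Q.e i)]
    rw [show Q.ric K y z = ∑ i, K (Q.e' i) y z (Q.e i) from rfl,
      Finset.sum_congr rfl fun i _ => expand i, ← Finset.smul_sum]
    have split : (∑ i, (Q.Rm (Q.e' i) y z (Q.e i) + (Q.Rm (Q.e' i) y z (Q.e i)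
          + Q.nablaF (Q.e' i) y z (Q.P (Q.e i)) - Q.nablaF y (Q.e' i) z (Q.P (Q.e i)))))
        = (∑ i, Q.Rm (Q.e' i) y z (Q.e i)) + ((∑ i, Q.Rm (Q.e' i) y z (Q.e i))
          + (∑ i, Q.nablaF (Q.e' i) y z (Q.P (Q.e i)))
          - ∑ i, Q.nablaF y (Q.e' i) z (Q.P (Q.e i))) := by
      rw [Finset.sum_add_distrib, Finset.sum_sub_distrib, Finset.sum_add_distrib]
    rw [split, hS1, hS2, show (∑ i, Q.Rm (Q.e' i) y z (Q.e i)) = Q.ric Q.Rm y z from rfl,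
      htrA, hθΩ, hA' y z, Algebra.smul_def, Algebra.smul_def, Algebra.smul_def,
      hβ, ← hMM]
    linear_combination (Q.ric Q.Rm y z) * hα2
  refine ⟨part1, ?_, Q.scalStar_K K hK⟩
  rw [show Q.scal K = ∑ i, Q.ric K (Q.e i) (Q.e' i) from rfl,
    Finset.sum_congr rfl fun i _ => part1 (Q.e i) (Q.e' i), Finset.sum_sub_distrib,
    show (∑ i, Q.ric Q.Rm (Q.e i) (Q.e' i)) = Q.scal Q.Rm from rfl, ← Finset.smul_sum]
  have hXsum : (∑ i, ((Q.trB A + Q.theta Ω) * (Q.g (Q.e i) (Q.e' i)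
        + Q.g (Q.e i) (Q.P (Q.e' i))) + (2*(n:ℝ)) • A (Q.e i) (Q.e' i)))
      = (Q.trB A + Q.theta Ω) * (((2*n : ℕ)) : Q.C) + (2*(n:ℝ)) • Q.trB A := by
    rw [Finset.sum_add_distrib]
    congr 1
    · rw [← Finset.mul_sum]
      congr 1
      rw [Finset.sum_add_distrib]
      have h1 : (∑ i, Q.g (Q.e i) (Q.e' i)) = (((2*n : ℕ)) : Q.C) := by
        rw [Finset.sum_congr rfl fun i (_ : i ∈ Finset.univ) => Q.gSymm (Q.e i) (Q.e' i)]
        exact Q.sum_diag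
      have h2 : (∑ i, Q.g (Q.e i) (Q.P (Q.e' i))) = 0 := by
        rw [Finset.sum_congr rfl fun i (_ : i ∈ Finset.univ) =>
          (by rw [Q.gP₂ (Q.e i) (Q.e' i), Q.gSymm (Q.P (Q.e i)) (Q.e' i)] :
            Q.g (Q.e i) (Q.P (Q.e' i)) = Q.g (Q.e' i) (Q.P (Q.e i)))]
        exact Q.sum_trP htr
      rw [h1, h2, add_zero]
    · rw [← Finset.smul_sum]
      rfl
  rw [hXsum, htrA, hθΩ, Algebra.smul_def, Algebra.smul_def, Algebra.smul_def,
    hβ, hγ, ← hMM]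
  linear_combination (-2 * algebraMap ℝ Q.C ((1:ℝ)/2) * Q.divg Ω
      + 2 * algebraMap ℝ Q.C ((1:ℝ)/2) * κ * Q.g Ω Ω
      - algebraMap ℝ Q.C ((1:ℝ)/2) * Q.g Ω Ω) * hκ
    - (Q.divg Ω - κ * Q.g Ω Ω) * hα2
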